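/- Let G be a graph and ℓ, u : V(G) → ℕ with ℓ(v) ≤ u(v) for all v. Then G has an orientation D with ℓ(v) ≤ d⁺_D(v) ≤ u(v) for all v if and only if for every S ⊆ V(G): ∑_{x∈S} ℓ(x) ≤ e[S] + δ(S) and e[S] ≤ ∑_{x∈S} u(x), where e[S] is the number of edges with both ends in S and δ(S) is the number of edges with exactly one end in S. -/

import Mathlib

attribute [local instance] Classical.propDecidable

/-- A loopless multigraph: edges indexed by `E` with endpoints in `Sym2 V`. -/
structure Multigraph (V E : Type) where
  ends : E → Sym2 V
  loopless : ∀ e, ¬ (ends e).IsDiag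

namespace Multigraph

variable {V E : Type}

/-- Degree of a vertex: number of edges incident to it. -/
noncomputable def deg [Fintype E] (G : Multigraph V E) (v : V) : ℕ :=
  (Finset.univ.filter fun e => v ∈ G.ends e).card

/-- Two vertices are adjacent if some edge joins them. -/
def Adj (G : Multigraph V E) (u v : V) : Prop :=
  u ≠ v ∧ ∃ e, G.ends e = s(u, v)

/-- An orientation assigns a tail and head to each edge, consistent with its endpoints. -/
structure Orientation (G : Multigraph V E) where
  tail : E → V
  head : E → V
  consistent : ∀ e, G.ends e = s(tail e, head e)

/-- Out-degree of a vertex in an orientation. -/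
noncomputable def Orientation.outDeg [Fintype E] {G : Multigraph V E} (D : G.Orientation)
    (v : V) : ℕ :=
  (Finset.univ.filter fun e => D.tail e = v).card

/-- An orientation is `F`-avoiding if no vertex has out-degree in its forbidden list. -/
def Orientation.Avoids [Fintype E] {G : Multigraph V E} (D : G.Orientation)
    (F : V → Finset ℕ) : Prop :=
  ∀ v, D.outDeg v ∉ F v

/-- Number of edges with both endpoints in `S`. -/
noncomputable def eIn [Fintype E] (G : Multigraph V E) (S : Finset V) : ℕ :=
  (Finset.univ.filter fun e => ∀ w ∈ G.ends e, w ∈ S).card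

/-- Number of edges with exactly one endpoint in `S`. -/
noncomputable def cut [Fintype E] (G : Multigraph V E) (S : Finset V) : ℕ :=
  (Finset.univ.filter fun e => (∃ w ∈ G.ends e, w ∈ S) ∧ ¬ ∀ w ∈ G.ends e, w ∈ S).card

/-- Reachability by directed paths in an orientation. -/
def Orientation.Reach {G : Multigraph V E} (D : G.Orientation) : V → V → Prop :=
  Relation.ReflTransGen fun a b => ∃ e, D.tail e = a ∧ D.head e = b

end Multigraph

namespace FGaux

open Multigraph Finset

variable {V E : Type}

/-- membership in ends via tail/head -/
lemma mem_ends_iff {G : Multigraph V E} (D : G.Orientation) (e : E) (w : V) :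
    w ∈ G.ends e ↔ w = D.tail e ∨ w = D.head e := by
  rw [D.consistent e, Sym2.mem_iff]

lemma tail_mem_ends {G : Multigraph V E} (D : G.Orientation) (e : E) :
    D.tail e ∈ G.ends e := (mem_ends_iff D e _).2 (Or.inl rfl)

/-- directed walks -/
inductive IsWalk {G : Multigraph V E} (D : G.Orientation) : V → V → List E → Prop
  | nil (a : V) : IsWalk D a a []
  | cons {a b c : V} {L : List E} {e : E} (h1 : D.tail e = a) (h2 : D.head e = c)
      (h : IsWalk D c b L) : IsWalk D a b (e :: L)

lemma isWalk_append {G : Multigraph V E} {D : G.Orientation} {a b c : V} {L1 L2 : List E}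
    (h1 : IsWalk D a c L1) (h2 : IsWalk D c b L2) : IsWalk D a b (L1 ++ L2) := by
  induction h1 with
  | nil => simpa using h2
  | cons ht hh _ ih => exact IsWalk.cons ht hh (ih h2)

lemma isWalk_decomp {G : Multigraph V E} {D : G.Orientation} {a b : V} {L1 L2 : List E}
    (h : IsWalk D a b (L1 ++ L2)) : ∃ c, IsWalk D a c L1 ∧ IsWalk D c b L2 := by
  induction L1 generalizing a with
  | nil => exact ⟨a, IsWalk.nil a, by simpa using h⟩
  | cons e L ih =>
    cases h with
    | cons ht hh h' =>
      obtain ⟨c, hc1, hc2⟩ := ih h'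
      exact ⟨c, IsWalk.cons ht hh hc1, hc2⟩

lemma reach_isWalk {G : Multigraph V E} {D : G.Orientation} {a b : V}
    (h : D.Reach a b) : ∃ L, IsWalk D a b L := by
  induction h with
  | refl => exact ⟨[], IsWalk.nil a⟩
  | tail _ hstep ih =>
    obtain ⟨L, hL⟩ := ih
    obtain ⟨e, he1, he2⟩ := hstep
    exact ⟨L ++ [e], isWalk_append hL (IsWalk.cons he1 he2 (IsWalk.nil _))⟩

lemma exists_nodup_walk_aux {G : Multigraph V E} {D : G.Orientation} :
    ∀ n (L : List E), L.length ≤ n → ∀ a b, IsWalk D a b L →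
      ∃ L', IsWalk D a b L' ∧ L'.Nodup ∧ L' ⊆ L := by
  intro n
  induction n with
  | zero =>
    intro L hL a b h
    have : L = [] := List.eq_nil_of_length_eq_zero (Nat.le_zero.1 hL)
    subst this
    exact ⟨[], h, List.nodup_nil, by simp⟩
  | succ n ih =>
    intro L hL a b h
    cases h with
    | nil => exact ⟨[], IsWalk.nil _, List.nodup_nil, by simp⟩
    | @cons a b c L e ht hh h' =>
      by_cases hmem : e ∈ L
      · obtain ⟨L2, L3, rfl⟩ := List.append_of_mem hmem
        obtain ⟨d, _, hd2⟩ := isWalk_decomp h'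
        cases hd2 with
        | cons ht' hh' h'' =>
          have : IsWalk D a b (e :: L3) := IsWalk.cons ht hh' h'' 
          have hlen : (e :: L3).length ≤ n := by
            simp at hL ⊢; omega
          obtain ⟨L', hw, hnd, hsub⟩ := ih _ hlen a b this
          exact ⟨L', hw, hnd, fun x hx => by
            have := hsub hx
            simp at this ⊢
            tauto⟩
      · have hlen : L.length ≤ n := by simp at hL; omega
        obtain ⟨L', hw, hnd, hsub⟩ := ih _ hlen c b h'
        refine ⟨e :: L', IsWalk.cons ht hh hw, ?_, ?_⟩
        · exact List.nodup_cons.2 ⟨fun hx => hmem (hsub hx), hnd⟩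
        · intro x hx
          rcases List.mem_cons.1 hx with rfl | hx
          · exact List.mem_cons_self
          · exact List.mem_cons_of_mem _ (hsub hx)

lemma exists_nodup_walk {G : Multigraph V E} {D : G.Orientation} {a b : V}
    (h : D.Reach a b) : ∃ L, IsWalk D a b L ∧ L.Nodup := by
  obtain ⟨L, hL⟩ := reach_isWalk h
  obtain ⟨L', h1, h2, _⟩ := exists_nodup_walk_aux L.length L le_rfl a b hL
  exact ⟨L', h1, h2⟩

/-- walk count identity on lists -/
lemma walk_count {G : Multigraph V E} {D : G.Orientation} {a b : V} {L : List E}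
    (h : IsWalk D a b L) (v : V) :
    (L.filter fun e => D.tail e = v).length + (if v = b then 1 else 0)
      = (L.filter fun e => D.head e = v).length + (if v = a then 1 else 0) := by
  induction h with
  | nil => simp
  | @cons a b c L e ht hh _ ih =>
    have hlen : ∀ (c : Prop) [Decidable c] (x : E) (l : List E),
        (if c then x :: l else l).length = (if c then 1 else 0) + l.length := by
      intro c _ x l; split <;> simp [Nat.add_comm]
    simp only [List.filter_cons, decide_eq_true_eq, ht, hh, hlen]
    simp only [@eq_comm _ a v, @eq_comm _ c v]
    split_ifs at ih ⊢ <;> omega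

/-- the flipped orientation along a list of edges -/
noncomputable def flip {G : Multigraph V E} (D : G.Orientation) (L : List E) :
    G.Orientation where
  tail e := if e ∈ L then D.head e else D.tail e
  head e := if e ∈ L then D.tail e else D.head e
  consistent e := by
    by_cases h : e ∈ L <;> simp only [h, if_pos, if_neg, not_false_iff]
    · rw [D.consistent e, Sym2.eq_swap]
    · exact D.consistent e

variable [Fintype E]

lemma card_filter_mem_list {p : E → Prop} {L : List E} (hnd : L.Nodup) :
    (Finset.univ.filter fun e => e ∈ L ∧ p e).card = (L.filter fun e => p e).length := by
  have h1 : (Finset.univ.filter fun e => e ∈ L ∧ p e) = L.toFinset.filter (fun e => p e) := by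
    ext e; simp [and_comm]
  have h2 : (Finset.univ.filter fun e => e ∈ L ∧ p e).card
      = (L.filter fun e => p e).toFinset.card := by
    congr 1
    ext e
    simp [List.mem_filter, and_comm]
  rw [h2]
  exact List.toFinset_card_of_nodup (hnd.filter _)

lemma outDeg_flip {G : Multigraph V E} {D : G.Orientation} {a b : V} {L : List E}
    (hw : IsWalk D a b L) (hnd : L.Nodup) (v : V) :
    (flip D L).outDeg v + (if v = a then 1 else 0) = D.outDeg v + (if v = b then 1 else 0) := by
  classical
  have key : ∀ (t : E → V),
      (Finset.univ.filter fun e => (if e ∈ L then t e else D.tail e) = v).card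
        = (Finset.univ.filter fun e => e ∈ L ∧ t e = v).card
          + (Finset.univ.filter fun e => e ∉ L ∧ D.tail e = v).card := by
    intro t
    rw [← Finset.card_union_of_disjoint]
    · congr 1
      ext e
      by_cases h : e ∈ L <;> simp [h]
    · rw [Finset.disjoint_filter]
      tauto
  have h1 : (flip D L).outDeg v
      = (Finset.univ.filter fun e => e ∈ L ∧ D.head e = v).card
        + (Finset.univ.filter fun e => e ∉ L ∧ D.tail e = v).card := by
    unfold Orientation.outDeg flip
    exact key D.head
  have h2 : D.outDeg v
      = (Finset.univ.filter fun e => e ∈ L ∧ D.tail e = v).card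
        + (Finset.univ.filter fun e => e ∉ L ∧ D.tail e = v).card := by
    unfold Orientation.outDeg
    rw [← key D.tail]
    congr 1; ext e; by_cases h : e ∈ L <;> simp [h]
  rw [h1, h2, card_filter_mem_list hnd, card_filter_mem_list hnd]
  have := walk_count hw v
  omega

/-- sum of outdegrees over S equals number of edges with tail in S -/
lemma sum_outDeg {G : Multigraph V E} (D : G.Orientation) (S : Finset V) :
    ∑ w ∈ S, D.outDeg w = (Finset.univ.filter fun e => D.tail e ∈ S).card := by
  classical
  rw [Finset.card_eq_sum_card_fiberwise (f := D.tail) (s := Finset.univ.filter fun e => D.tail e ∈ S) (t := S)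
    (fun e he => (Finset.mem_filter.1 he).2)]
  apply Finset.sum_congr rfl
  intro w hw
  unfold Multigraph.Orientation.outDeg
  rw [Finset.filter_filter]
  congr 1
  ext e
  simp only [Finset.mem_filter, Finset.mem_univ, true_and]
  constructor
  · intro h2; exact ⟨by rw [h2]; exact hw, h2⟩
  · rintro ⟨_, h2⟩; exact h2

end FGaux

namespace FGaux2

open Multigraph Finset FGaux

variable {V E : Type} [Fintype V] [Fintype E]

noncomputable def phi (l u : V → ℕ) {G : Multigraph V E} (D : G.Orientation) : ℕ :=
  ∑ v, ((l v - D.outDeg v) + (D.outDeg v - u v))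

lemma improve (G : Multigraph V E) (l u : V → ℕ) (hlu : ∀ v, l v ≤ u v)
    (hS : ∀ S : Finset V,
      (∑ x ∈ S, l x) ≤ G.eIn S + G.cut S ∧ G.eIn S ≤ ∑ x ∈ S, u x) :
    ∀ n, ∀ D : G.Orientation, phi l u D ≤ n →
      ∃ D' : G.Orientation, ∀ v, l v ≤ D'.outDeg v ∧ D'.outDeg v ≤ u v := by
  intro n
  induction n with
  | zero =>
    intro D hD
    refine ⟨D, fun v => ?_⟩
    have h0 : phi l u D = 0 := Nat.le_zero.1 hD
    have := (Finset.sum_eq_zero_iff.1 h0) v (Finset.mem_univ v)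
    omega
  | succ n ih =>
    intro D hD
    by_cases h0 : phi l u D = 0
    · refine ⟨D, fun v => ?_⟩
      have := (Finset.sum_eq_zero_iff.1 h0) v (Finset.mem_univ v)
      omega
    · -- there is a violated vertex
      have hex : ∃ v, D.outDeg v < l v ∨ u v < D.outDeg v := by
        by_contra hc
        push_neg at hc
        apply h0
        apply Finset.sum_eq_zero
        intro v _
        have := hc v
        omega
      obtain ⟨v, hv⟩ := hex
      -- in either case, produce D' with phi < phi D
      have key : ∃ D' : G.Orientation, phi l u D' < phi l u D := by
        rcases hv with hdef | hexc
        · -- deficiency: S = vertices reaching v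
          set S : Finset V := Finset.univ.filter (fun w => D.Reach w v) with hSdef
          have hvS : v ∈ S := by
            rw [hSdef, Finset.mem_filter]
            exact ⟨Finset.mem_univ v, Relation.ReflTransGen.refl⟩
          have hclosed : ∀ e, D.head e ∈ S → D.tail e ∈ S := by
            intro e he
            simp only [hSdef, Finset.mem_filter, Finset.mem_univ, true_and] at he ⊢
            exact Relation.ReflTransGen.head ⟨e, rfl, rfl⟩ he
          -- e[S] + cut S ≤ sum of outdegs over S
          have hcount : G.eIn S + G.cut S ≤ ∑ w ∈ S, D.outDeg w := by
            rw [sum_outDeg]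
            unfold Multigraph.eIn Multigraph.cut
            rw [← Finset.card_union_of_disjoint]
            · apply Finset.card_le_card
              intro e he
              simp only [Finset.mem_union, Finset.mem_filter, Finset.mem_univ, true_and] at he ⊢
              rcases he with he | he
              · exact he (D.tail e) (tail_mem_ends D e)
              · obtain ⟨⟨w, hw1, hw2⟩, hn⟩ := he
                rcases (mem_ends_iff D e w).1 hw1 with rfl | rfl
                · exact hw2
                · exfalso
                  apply hn
                  intro x hx
                  rcases (mem_ends_iff D e x).1 hx with rfl | rfl
                  · exact hclosed e hw2
                  · exact hw2
            · refine Finset.disjoint_left.2 fun e he1 he2 => ?_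
              simp only [Finset.mem_filter] at he1 he2
              exact he2.2.2 he1.2
          -- find w in S with l w < outDeg w
          have hw : ∃ w ∈ S, l w < D.outDeg w := by
            by_contra hc
            push_neg at hc
            have h1 : ∑ w ∈ S, D.outDeg w < ∑ w ∈ S, l w :=
              Finset.sum_lt_sum hc ⟨v, hvS, hdef⟩
            have h2 := (hS S).1
            omega
          obtain ⟨w, hwS, hwlt⟩ := hw
          have hreach : D.Reach w v := by
            simpa [hSdef] using hwS
          have hwv : w ≠ v := by
            intro h; rw [h] at hwlt; omega
          obtain ⟨L, hLwalk, hLnd⟩ := exists_nodup_walk hreach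
          refine ⟨flip D L, ?_⟩
          have hflip := fun x => outDeg_flip hLwalk hLnd x
          apply Finset.sum_lt_sum
          · intro x _
            have hx := hflip x
            rcases eq_or_ne x w with rfl | hxw <;> rcases eq_or_ne x v with rfl | hxv <;>
              simp_all <;> omega
          · refine ⟨v, Finset.mem_univ v, ?_⟩
            have hx := hflip v
            have hy := hflip w
            rw [if_neg (Ne.symm hwv), if_pos rfl] at hx
            rw [if_pos rfl, if_neg hwv] at hy
            have := hlu v
            omega
        · -- excess: S = vertices reachable from v
          set S : Finset V := Finset.univ.filter (fun w => D.Reach v w) with hSdef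
          have hvS : v ∈ S := by
            rw [hSdef, Finset.mem_filter]
            exact ⟨Finset.mem_univ v, Relation.ReflTransGen.refl⟩
          have hclosed : ∀ e, D.tail e ∈ S → D.head e ∈ S := by
            intro e he
            simp only [hSdef, Finset.mem_filter, Finset.mem_univ, true_and] at he ⊢
            exact Relation.ReflTransGen.tail he ⟨e, rfl, rfl⟩
          have hcount : ∑ w ∈ S, D.outDeg w = G.eIn S := by
            rw [sum_outDeg]
            unfold Multigraph.eIn
            congr 1
            ext e
            simp only [Finset.mem_filter, Finset.mem_univ, true_and]
            constructor
            · intro h x hx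
              rcases (mem_ends_iff D e x).1 hx with rfl | rfl
              · exact h
              · exact hclosed e h
            · intro h
              exact h (D.tail e) (tail_mem_ends D e)
          have hw : ∃ w ∈ S, D.outDeg w < u w := by
            by_contra hc
            push_neg at hc
            have h1 : ∑ w ∈ S, u w < ∑ w ∈ S, D.outDeg w :=
              Finset.sum_lt_sum hc ⟨v, hvS, hexc⟩
            have h2 := (hS S).2
            omega
          obtain ⟨w, hwS, hwlt⟩ := hw
          have hreach : D.Reach v w := by
            simpa [hSdef] using hwS
          have hwv : v ≠ w := by
            intro h; rw [h] at hexc; omega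
          obtain ⟨L, hLwalk, hLnd⟩ := exists_nodup_walk hreach
          refine ⟨flip D L, ?_⟩
          have hflip := fun x => outDeg_flip hLwalk hLnd x
          apply Finset.sum_lt_sum
          · intro x _
            have hx := hflip x
            rcases eq_or_ne x w with rfl | hxw <;> rcases eq_or_ne x v with rfl | hxv <;>
              simp_all <;> omega
          · refine ⟨v, Finset.mem_univ v, ?_⟩
            have hx := hflip v
            have hy := hflip w
            rw [if_pos rfl, if_neg hwv] at hx
            rw [if_neg (Ne.symm hwv), if_pos rfl] at hy
            have := hlu v
            omega
      obtain ⟨D', hD'⟩ := key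
      exact ih D' (by omega)

end FGaux2

/-- the Frank–Gyárfás orientation theorem. -/
theorem stmt9 {V E : Type} [Fintype V] [Fintype E] (G : Multigraph V E)
    (l u : V → ℕ) (hlu : ∀ v, l v ≤ u v) :
    (∃ D : G.Orientation, ∀ v, l v ≤ D.outDeg v ∧ D.outDeg v ≤ u v) ↔
      (∀ S : Finset V,
        (∑ x ∈ S, l x) ≤ G.eIn S + G.cut S ∧ G.eIn S ≤ ∑ x ∈ S, u x) := by
  constructor
  · rintro ⟨D, hD⟩ S
    have hsum := FGaux.sum_outDeg D S
    constructor
    · have h1 : ∑ x ∈ S, l x ≤ ∑ w ∈ S, D.outDeg w :=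
        Finset.sum_le_sum fun x _ => (hD x).1
      have h2 : (Finset.univ.filter fun e => D.tail e ∈ S).card ≤ G.eIn S + G.cut S := by
        unfold Multigraph.eIn Multigraph.cut
        rw [← Finset.card_union_of_disjoint]
        · apply Finset.card_le_card
          intro e he
          simp only [Finset.mem_union, Finset.mem_filter, Finset.mem_univ, true_and] at he ⊢
          by_cases h : ∀ w ∈ G.ends e, w ∈ S
          · exact Or.inl h
          · exact Or.inr ⟨⟨D.tail e, FGaux.tail_mem_ends D e, he⟩, h⟩
        · refine Finset.disjoint_left.2 fun e he1 he2 => ?_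
          simp only [Finset.mem_filter] at he1 he2
          exact he2.2.2 he1.2
      omega
    · have h1 : G.eIn S ≤ (Finset.univ.filter fun e => D.tail e ∈ S).card := by
        unfold Multigraph.eIn
        apply Finset.card_le_card
        intro e he
        simp only [Finset.mem_filter, Finset.mem_univ, true_and] at he ⊢
        exact he (D.tail e) (FGaux.tail_mem_ends D e)
      have h2 : ∑ w ∈ S, D.outDeg w ≤ ∑ x ∈ S, u x :=
        Finset.sum_le_sum fun x _ => (hD x).2
      omega
  · intro hS
    let D0 : G.Orientation :=
      { tail := fun e => (G.ends e).out.1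
        head := fun e => (G.ends e).out.2
        consistent := fun e => by
          symm
          have := (G.ends e).out_eq
          simpa [Sym2.mk] using this }
    exact FGaux2.improve G l u hlu hS (FGaux2.phi l u D0) D0 le_rfl
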